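/- For every v ∈ ℂ^{2n} and every alternating 2n×2n complex matrix X, there exists g ∈ Sp(2n, ℂ) such that the vector gv has its last n coordinates equal to zero and the matrix g X gᵀ has (g X gᵀ)_{ij} = 0 for all n < i, j ≤ 2n (i.e., its lower-right n×n block vanishes). -/

import Mathlib

open Matrix Module

/-- The standard symplectic form matrix `J = [[0, −1ₙ], [1ₙ, 0]]`. -/
def Jmat (n : ℕ) (R : Type*) [CommRing R] :
    Matrix (Fin n ⊕ Fin n) (Fin n ⊕ Fin n) R :=
  Matrix.fromBlocks 0 (-1) 1 0

namespace SympAux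

variable {n : ℕ}

lemma J_mul_J (n : ℕ) : Jmat n ℂ * Jmat n ℂ = -1 := by
  simp only [Jmat, Matrix.fromBlocks_multiply]
  ext (i|i) (j|j) <;> simp [Matrix.fromBlocks, Matrix.one_apply]

lemma J_transpose (n : ℕ) : (Jmat n ℂ)ᵀ = -(Jmat n ℂ) := by
  simp only [Jmat, Matrix.fromBlocks_transpose]
  ext (i|i) (j|j) <;> simp [Matrix.fromBlocks, Matrix.one_apply]

noncomputable def Bform (n : ℕ) : LinearMap.BilinForm ℂ ((Fin n ⊕ Fin n) → ℂ) :=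
  LinearMap.mk₂ ℂ (fun x y => x ⬝ᵥ (Jmat n ℂ) *ᵥ y)
    (fun x x' y => by simp [add_dotProduct])
    (fun c x y => by simp [smul_dotProduct])
    (fun x y y' => by simp [mulVec_add, dotProduct_add])
    (fun c x y => by simp [mulVec_smul, dotProduct_smul])

lemma Bform_apply (x y : (Fin n ⊕ Fin n) → ℂ) : Bform n x y = x ⬝ᵥ (Jmat n ℂ) *ᵥ y := rfl

lemma Bform_skew (x y : (Fin n ⊕ Fin n) → ℂ) : Bform n x y = - Bform n y x := by
  rw [Bform_apply, Bform_apply, dotProduct_mulVec, ← mulVec_transpose, J_transpose]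
  simp [neg_mulVec, dotProduct_comm]

lemma Bform_alt (x : (Fin n ⊕ Fin n) → ℂ) : Bform n x x = 0 := by
  have h := Bform_skew x x
  linear_combination h / 2

lemma Bform_nondeg : (Bform n).Nondegenerate := by
  refine (LinearMap.IsRefl.nondegenerate_iff_separatingLeft
    (fun x y h => by rw [Bform_skew, h, neg_zero])).mpr ?_
  intro x hx
  have h : x ᵥ* Jmat n ℂ = 0 := by
    ext j
    have := hx (Pi.single j 1)
    rwa [Bform_apply, dotProduct_mulVec, dotProduct_single, mul_one] at this
  have h2 : x ᵥ* (Jmat n ℂ * (-(Jmat n ℂ))) = 0 := by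
    rw [← vecMul_vecMul, h, zero_vecMul]
  rwa [mul_neg, J_mul_J, neg_neg, vecMul_one] at h2

lemma Bform_refl : (Bform n).IsRefl := by
  intro x y h
  rw [Bform_skew, h, neg_zero]

variable (M : Matrix (Fin n ⊕ Fin n) (Fin n ⊕ Fin n) ℂ)

/-- The operator `T = -J M`, self-adjoint for the symplectic form. -/
noncomputable def Top : ((Fin n ⊕ Fin n) → ℂ) →ₗ[ℂ] ((Fin n ⊕ Fin n) → ℂ) :=
  Matrix.mulVecLin (-(Jmat n ℂ) * M)

lemma M_eq_J_Top (x : (Fin n ⊕ Fin n) → ℂ) :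
    M *ᵥ x = (Jmat n ℂ) *ᵥ (Top M x) := by
  show _ = (Jmat n ℂ) *ᵥ ((-(Jmat n ℂ) * M) *ᵥ x)
  rw [mulVec_mulVec, ← mul_assoc, mul_neg, J_mul_J, neg_neg, one_mul]

lemma B_Top_right (x y : (Fin n ⊕ Fin n) → ℂ) :
    Bform n x (Top M y) = x ⬝ᵥ M *ᵥ y := by
  rw [Bform_apply, ← M_eq_J_Top]

lemma B_Top_left (hMalt : Mᵀ = -M) (x y : (Fin n ⊕ Fin n) → ℂ) :
    Bform n (Top M x) y = Bform n x (Top M y) := by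
  rw [B_Top_right, Bform_skew, B_Top_right, dotProduct_mulVec, ← mulVec_transpose, hMalt]
  simp [neg_mulVec, dotProduct_comm]

/-- The property of being a `T`-invariant isotropic subspace containing `u`. -/
def Good (u : (Fin n ⊕ Fin n) → ℂ) (W : Submodule ℂ ((Fin n ⊕ Fin n) → ℂ)) : Prop :=
  u ∈ W ∧ (∀ x ∈ W, Top M x ∈ W) ∧ ∀ x ∈ W, ∀ y ∈ W, Bform n x y = 0

set_option maxHeartbeats 1000000 in
lemma exists_good_lagrangian (hMalt : Mᵀ = -M) (u : (Fin n ⊕ Fin n) → ℂ) :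
    ∃ W : Submodule ℂ ((Fin n ⊕ Fin n) → ℂ), Good M u W ∧ finrank ℂ W = n := by
  classical
  set T := Top (n := n) M with hT
  have hTT : ∀ x y, Bform n (T x) y = Bform n x (T y) := B_Top_left M hMalt
  have hpow : ∀ (k : ℕ) (x y : (Fin n ⊕ Fin n) → ℂ),
      Bform n ((T ^ k) x) y = Bform n x ((T ^ k) y) := by
    intro k
    induction k with
    | zero => intro x y; simp
    | succ k ih =>
      intro x y
      rw [pow_succ, Module.End.mul_apply, Module.End.mul_apply, ih, hTT,
        ← Module.End.mul_apply, ← Module.End.mul_apply, ← pow_succ', ← pow_succ]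
  have hVdim : finrank ℂ ((Fin n ⊕ Fin n) → ℂ) = n + n := by
    simp [finrank_pi]
  -- the Krylov subspace of u
  set S : Set ((Fin n ⊕ Fin n) → ℂ) := Set.range (fun k : ℕ => (T ^ k) u) with hS
  have hGood0 : Good M u (Submodule.span ℂ S) := by
    refine ⟨Submodule.subset_span ⟨0, by simp⟩, ?_, ?_⟩
    · intro x hx
      have hmap : Submodule.map T (Submodule.span ℂ S) ≤ Submodule.span ℂ S := by
        rw [Submodule.map_span, Submodule.span_le]
        rintro _ ⟨_, ⟨k, rfl⟩, rfl⟩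
        exact Submodule.subset_span ⟨k + 1, by
          show (T ^ (k + 1)) u = T ((T ^ k) u)
          rw [pow_succ', Module.End.mul_apply]⟩
      exact hmap ⟨x, hx, rfl⟩
    · have hgen : ∀ (x y : (Fin n ⊕ Fin n) → ℂ), x ∈ S → y ∈ S → Bform n x y = 0 := by
        rintro _ _ ⟨i, rfl⟩ ⟨j, rfl⟩
        have h1 : Bform n ((T ^ i) u) ((T ^ j) u) = Bform n u ((T ^ (i + j)) u) := by
          rw [hpow, ← Module.End.mul_apply, ← pow_add]
        have h2 : Bform n u ((T ^ (i + j)) u) = 0 := by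
          have ha := hpow (i + j) u u
          have hb := Bform_skew ((T ^ (i + j)) u) u
          linear_combination (hb - ha) / 2
        rw [h1, h2]
      intro x hx y hy
      refine Submodule.span_induction₂ (R := ℂ) (s := S)
        (p := fun x y _ _ => Bform n x y = 0)
        (fun x y hx hy => hgen x y hx hy)
        (fun y _ => by simp) (fun x _ => by simp)
        (fun x y z hx hy hz h1 h2 => by
          have h1' : Bform n x z = 0 := h1
          have h2' : Bform n y z = 0 := h2
          simp [map_add, LinearMap.add_apply, h1', h2'])
        (fun x y z hx hy hz h1 h2 => by
          have h1' : Bform n x y = 0 := h1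
          have h2' : Bform n x z = 0 := h2
          simp [map_add, h1', h2'])
        (fun r x y hx hy h1 => by
          have h1' : Bform n x y = 0 := h1
          simp [_root_.map_smul, LinearMap.smul_apply, h1'])
        (fun r x y hx hy h1 => by
          have h1' : Bform n x y = 0 := h1
          simp [_root_.map_smul, h1'])
        hx hy
  -- pick a Good subspace of maximal dimension
  set D : Set ℕ := {d | ∃ W : Submodule ℂ ((Fin n ⊕ Fin n) → ℂ),
      Good M u W ∧ finrank ℂ W = d} with hD
  have hDne : D.Nonempty := ⟨_, _, hGood0, rfl⟩
  have hDbdd : BddAbove D := by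
    refine ⟨n + n, ?_⟩
    rintro d ⟨W, _, rfl⟩
    exact hVdim ▸ W.finrank_le
  obtain ⟨W, hW, hWd⟩ := Nat.sSup_mem hDne hDbdd
  have hmax : ∀ W' : Submodule ℂ ((Fin n ⊕ Fin n) → ℂ),
      Good M u W' → finrank ℂ W' ≤ sSup D := fun W' h => le_csSup hDbdd ⟨W', h, rfl⟩
  refine ⟨W, hW, ?_⟩
  -- W is contained in its orthogonal, so its dimension is at most n
  have hWle : W ≤ (Bform n).orthogonal W := by
    intro x hx
    intro y hy
    exact hW.2.2 y hy x hx
  have horth := LinearMap.BilinForm.finrank_orthogonal (Bform_nondeg (n := n)) W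
  have hfr2n : finrank ℂ W ≤ n + n := hVdim ▸ W.finrank_le
  have hle : finrank ℂ W ≤ n := by
    have h1 : finrank ℂ W ≤ finrank ℂ ((Bform n).orthogonal W) := Submodule.finrank_mono hWle
    rw [horth, hVdim] at h1
    omega
  -- if the dimension is less than n, we can enlarge W
  by_contra hne
  have hlt : finrank ℂ W < n := lt_of_le_of_ne hle (fun h => hne h)
  set U := (Bform n).orthogonal W with hU
  have hUdim : finrank ℂ U = n + n - finrank ℂ W := by rw [horth, hVdim]
  have hTU : ∀ x ∈ U, T x ∈ U := by
    intro x hx w hw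
    show Bform n w (T x) = 0
    rw [← hTT]
    exact hx (T w) (hW.2.1 w hw)
  set Tu : U →ₗ[ℂ] U := T.restrict hTU with hTu
  set W' : Submodule ℂ U := W.comap U.subtype with hW'
  have hW'ne : W' ≠ ⊤ := by
    intro htop
    have hUW : U ≤ W := by
      intro x hx
      have : (⟨x, hx⟩ : U) ∈ W' := htop ▸ Submodule.mem_top
      exact this
    have := Submodule.finrank_mono hUW
    omega
  haveI : Nontrivial (U ⧸ W') :=
    Submodule.Quotient.nontrivial_iff.mpr hW'ne
  have hcomap : W' ≤ W'.comap Tu := by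
    intro x hx
    have hx' : (x : (Fin n ⊕ Fin n) → ℂ) ∈ W := hx
    have : (Tu x : (Fin n ⊕ Fin n) → ℂ) = T x := rfl
    show (Tu x : (Fin n ⊕ Fin n) → ℂ) ∈ W
    rw [this]
    exact hW.2.1 _ hx'
  set Tq := Submodule.mapQ W' W' Tu hcomap with hTq
  obtain ⟨μ, hμ⟩ := Module.End.exists_eigenvalue Tq
  obtain ⟨z, hz⟩ := hμ.exists_hasEigenvector
  obtain ⟨xb, hxb⟩ := Submodule.Quotient.mk_surjective W' z
  set x : (Fin n ⊕ Fin n) → ℂ := (xb : (Fin n ⊕ Fin n) → ℂ) with hx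
  have hxW : x ∉ W := by
    intro hmem
    apply hz.2
    rw [← hxb]
    exact (Submodule.Quotient.mk_eq_zero _).mpr hmem
  have hTx : T x - μ • x ∈ W := by
    have h1 : Submodule.Quotient.mk (Tu xb) = Tq z := by
      rw [← hxb, Submodule.mapQ_apply]
    have h2 : Tq z = Submodule.Quotient.mk (μ • xb) := by
      rw [hz.apply_eq_smul, ← hxb, ← Submodule.Quotient.mk_smul]
    have h3 : Tu xb - μ • xb ∈ W' := by
      rw [← Submodule.Quotient.mk_eq_zero, Submodule.Quotient.mk_sub, h1, h2, sub_self]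
    have : ((Tu xb - μ • xb : U) : (Fin n ⊕ Fin n) → ℂ) ∈ W := h3
    exact this
  have hxU : x ∈ U := xb.2
  set W₂ := W ⊔ (ℂ ∙ x) with hW₂
  have hxW₂ : x ∈ W₂ := Submodule.mem_sup_right (Submodule.mem_span_singleton_self x)
  have hWlt : W < W₂ := lt_of_le_of_ne le_sup_left (fun h => hxW (h ▸ hxW₂))
  have hGood₂ : Good M u W₂ := by
    have hmem₂ : ∀ y ∈ W₂, ∃ w ∈ W, ∃ c : ℂ, y = w + c • x := by
      intro y hy
      obtain ⟨w, hw, s, hs, rfl⟩ := Submodule.mem_sup.mp hy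
      obtain ⟨c, rfl⟩ := Submodule.mem_span_singleton.mp hs
      exact ⟨w, hw, c, rfl⟩
    refine ⟨Submodule.mem_sup_left hW.1, ?_, ?_⟩
    · intro y hy
      obtain ⟨w, hw, c, rfl⟩ := hmem₂ y hy
      have hTxmem : T x ∈ W₂ := by
        have heq : T x = (T x - μ • x) + μ • x := by abel
        rw [heq]
        exact add_mem (Submodule.mem_sup_left hTx) (Submodule.smul_mem _ _ hxW₂)
      rw [map_add, _root_.map_smul]
      exact add_mem (Submodule.mem_sup_left (hW.2.1 w hw)) (Submodule.smul_mem _ _ hTxmem)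
    · intro y hy z' hz'
      obtain ⟨w, hw, c, rfl⟩ := hmem₂ y hy
      obtain ⟨w', hw', c', rfl⟩ := hmem₂ z' hz'
      have h1 : Bform n w w' = 0 := hW.2.2 w hw w' hw'
      have h2 : Bform n w x = 0 := hxU w hw
      have h3 : Bform n x w' = 0 := by rw [Bform_skew, hxU w' hw', neg_zero]
      have h4 : Bform n x x = 0 := Bform_alt x
      simp only [map_add, _root_.map_smul, LinearMap.add_apply, LinearMap.smul_apply,
        smul_eq_mul, h1, h2, h3, h4]
      ring
  have := hmax W₂ hGood₂
  have := Submodule.finrank_lt_finrank_of_lt hWlt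
  omega

end SympAux

open SympAux in
set_option maxHeartbeats 1000000 in
theorem exists_symplectic_normalizer' {n : ℕ} (hn : 1 ≤ n)
    (v : Fin n ⊕ Fin n → ℂ)
    (M : Matrix (Fin n ⊕ Fin n) (Fin n ⊕ Fin n) ℂ)
    (hMalt : Mᵀ = -M) (hMdiag : ∀ i, M i i = 0) :
    ∃ g : Matrix (Fin n ⊕ Fin n) (Fin n ⊕ Fin n) ℂ,
      g * Jmat n ℂ * gᵀ = Jmat n ℂ ∧
      (∀ i : Fin n, g.mulVec v (Sum.inr i) = 0) ∧
      (∀ i j : Fin n, (g * M * gᵀ) (Sum.inr i) (Sum.inr j) = 0) := by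
  classical
  set u : (Fin n ⊕ Fin n) → ℂ := (-(Jmat n ℂ)) *ᵥ v with hu
  have hJu : (Jmat n ℂ) *ᵥ u = v := by
    rw [hu, mulVec_mulVec, mul_neg, J_mul_J, neg_neg, one_mulVec]
  obtain ⟨W, hW, hWrank⟩ := exists_good_lagrangian M hMalt u
  let bb : Basis (Fin n) ℂ W := Module.finBasisOfFinrankEq ℂ W hWrank
  set b : Fin n → ((Fin n ⊕ Fin n) → ℂ) := fun i => (bb i : (Fin n ⊕ Fin n) → ℂ) with hb
  have hbW : ∀ i, b i ∈ W := fun i => (bb i).2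
  have hbb : ∀ i j, Bform n (b i) (b j) = 0 := fun i j => hW.2.2 _ (hbW i) _ (hbW j)
  -- dual family
  set f : Fin n → Module.Dual ℂ ((Fin n ⊕ Fin n) → ℂ) :=
    fun i => Subspace.dualLift W (-(bb.coord i)) with hf
  set a' : Fin n → ((Fin n ⊕ Fin n) → ℂ) :=
    fun i => ((Bform n).toDual Bform_nondeg).symm (f i) with ha'
  have ha'b : ∀ i j, Bform n (a' i) (b j) = -(if i = j then 1 else 0) := by
    intro i j
    rw [ha']
    rw [LinearMap.BilinForm.apply_toDual_symm_apply (hB := Bform_nondeg)]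
    show Subspace.dualLift W (-(bb.coord i)) ((bb j : (Fin n ⊕ Fin n) → ℂ)) = _
    rw [Subspace.dualLift_of_subtype]
    by_cases h : i = j <;>
      simp [h, Basis.coord_apply, Basis.repr_self, Finsupp.single_apply, Ne.symm]
  set c : Fin n → Fin n → ℂ := fun i k => Bform n (a' i) (a' k) with hc
  have hcskew : ∀ i j, c j i = - c i j := by
    intro i j
    rw [hc]
    exact Bform_skew (a' j) (a' i)
  set a : Fin n → ((Fin n ⊕ Fin n) → ℂ) :=
    fun i => a' i + ∑ k, (-(c i k)/2) • b k with ha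
  have hab : ∀ i j, Bform n (a i) (b j) = -(if i = j then 1 else 0) := by
    intro i j
    rw [ha]
    simp only [map_add, map_sum, _root_.map_smul, LinearMap.add_apply, LinearMap.sum_apply,
      LinearMap.smul_apply, smul_eq_mul, hbb, ha'b, mul_zero, Finset.sum_const_zero, add_zero]
  have hba : ∀ i j, Bform n (b i) (a j) = (if i = j then 1 else 0) := by
    intro i j
    rw [Bform_skew, hab]
    by_cases h : i = j <;> simp [h, Ne.symm]
  have haa : ∀ i j, Bform n (a i) (a j) = 0 := by
    intro i j
    have key : ∀ y, Bform n (a i) y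
        = Bform n (a' i) y + ∑ k, (-(c i k)/2) * Bform n (b k) y := by
      intro y
      rw [ha]
      simp only [map_add, map_sum, _root_.map_smul, LinearMap.add_apply, LinearMap.sum_apply,
        LinearMap.smul_apply, smul_eq_mul]
    have h2 : Bform n (a' i) (a j)
        = Bform n (a' i) (a' j) + ∑ k, (-(c j k)/2) * Bform n (a' i) (b k) := by
      rw [ha]
      simp only [map_add, map_sum, _root_.map_smul, smul_eq_mul]
    have h3 : ∑ k, (-(c i k)/2) * Bform n (b k) (a j) = -(c i j)/2 := by
      rw [Finset.sum_eq_single j]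
      · rw [hba]; simp
      · intro k _ hk; rw [hba]; simp [hk]
      · intro h; exact absurd (Finset.mem_univ j) h
    have h4 : ∑ k, (-(c j k)/2) * Bform n (a' i) (b k) = c j i / 2 := by
      rw [Finset.sum_eq_single i]
      · rw [ha'b]; simp; ring
      · intro k _ hk; rw [ha'b]; simp [Ne.symm hk]
      · intro h; exact absurd (Finset.mem_univ i) h
    rw [key (a j), h2, h4, h3]
    have hcc : Bform n (a' i) (a' j) = c i j := rfl
    have hsk : c j i = - c i j := hcskew i j
    rw [hcc]
    linear_combination hsk / 2
  -- the symplectic matrix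
  set g : Matrix (Fin n ⊕ Fin n) (Fin n ⊕ Fin n) ℂ :=
    Matrix.of (Sum.elim a b) with hg
  have key : ∀ (N : Matrix (Fin n ⊕ Fin n) (Fin n ⊕ Fin n) ℂ) p q,
      (g * N * gᵀ) p q = (Sum.elim a b p) ⬝ᵥ N *ᵥ (Sum.elim a b q) := by
    intro N p q
    show ∑ s, (∑ r, g p r * N r s) * gᵀ s q = _
    simp only [Matrix.transpose_apply, dotProduct, Matrix.mulVec, Finset.sum_mul]
    rw [Finset.sum_comm]
    refine Finset.sum_congr rfl fun r _ => ?_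
    simp only [Finset.mul_sum]
    refine Finset.sum_congr rfl fun t _ => ?_
    show g p r * N r t * g q t = _
    rw [hg]
    simp only [Matrix.of_apply]
    ring
  have hBg : ∀ p q, (g * Jmat n ℂ * gᵀ) p q = Bform n (Sum.elim a b p) (Sum.elim a b q) := by
    intro p q
    rw [key, Bform_apply]
  refine ⟨g, ?_, ?_, ?_⟩
  · ext p q
    rw [hBg]
    rcases p with i | i <;> rcases q with j | j
    · rw [Sum.elim_inl, Sum.elim_inl, haa]
      simp [Jmat, Matrix.fromBlocks]
    · rw [Sum.elim_inl, Sum.elim_inr, hab]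
      simp [Jmat, Matrix.fromBlocks, Matrix.one_apply]
    · rw [Sum.elim_inr, Sum.elim_inl, hba]
      simp [Jmat, Matrix.fromBlocks, Matrix.one_apply]
    · rw [Sum.elim_inr, Sum.elim_inr, hbb]
      simp [Jmat, Matrix.fromBlocks]
  · intro i
    show g (Sum.inr i) ⬝ᵥ v = 0
    have : g (Sum.inr i) = b i := rfl
    rw [this, ← hJu, ← Bform_apply]
    exact hW.2.2 _ (hbW i) _ hW.1
  · intro i j
    rw [key]
    rw [Sum.elim_inr, Sum.elim_inr, M_eq_J_Top M (b j), ← Bform_apply]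
    exact hW.2.2 _ (hbW i) _ (hW.2.1 _ (hbW j))


/-- For every `v ∈ ℂ^{2n}` and every alternating `2n×2n` complex matrix `M`
there exists `g ∈ Sp(2n, ℂ)` such that `gv` has its last `n` coordinates zero
and the lower-right `n×n` block of `g M gᵀ` vanishes. -/
theorem exists_symplectic_normalizer {n : ℕ} (hn : 1 ≤ n)
    (v : Fin n ⊕ Fin n → ℂ)
    (M : Matrix (Fin n ⊕ Fin n) (Fin n ⊕ Fin n) ℂ)
    (hMalt : Mᵀ = -M) (hMdiag : ∀ i, M i i = 0) :
    ∃ g : Matrix (Fin n ⊕ Fin n) (Fin n ⊕ Fin n) ℂ,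
      g * Jmat n ℂ * gᵀ = Jmat n ℂ ∧
      (∀ i : Fin n, g.mulVec v (Sum.inr i) = 0) ∧
      (∀ i j : Fin n, (g * M * gᵀ) (Sum.inr i) (Sum.inr j) = 0) := by
  exact exists_symplectic_normalizer' hn v M hMalt hMdiag
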